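/- Let a, b, c be positive real numbers and let C := (1/2)(ab/c + bc/a + ca/b). Then C² ≥ a² + b², C² ≥ b² + c², and C² ≥ c² + a²; consequently C > a, C > b, and C > c. -/

import Mathlib

theorem dirac_sphere_C_bounds (a b c : ℝ) (ha : 0 < a) (hb : 0 < b) (hc : 0 < c)
    (C : ℝ) (hC : C = (1/2) * (a*b/c + b*c/a + c*a/b)) :
    C^2 ≥ a^2 + b^2 ∧ C^2 ≥ b^2 + c^2 ∧ C^2 ≥ c^2 + a^2 ∧
      C > a ∧ C > b ∧ C > c := by
  set x := a*b/c with hx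
  set y := b*c/a with hy
  set z := c*a/b with hz
  have hxp : 0 < x := div_pos (mul_pos ha hb) hc
  have hyp : 0 < y := div_pos (mul_pos hb hc) ha
  have hzp : 0 < z := div_pos (mul_pos hc ha) hb
  have hxy : x * y = b^2 := by rw [hx, hy]; field_simp
  have hyz : y * z = c^2 := by rw [hy, hz]; field_simp
  have hzx : z * x = a^2 := by rw [hz, hx]; field_simp
  have h1 : C^2 ≥ a^2 + b^2 := by
    rw [hC, ← hzx, ← hxy]; nlinarith [sq_nonneg (x - y - z)]
  have h2 : C^2 ≥ b^2 + c^2 := by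
    rw [hC, ← hxy, ← hyz]; nlinarith [sq_nonneg (y - x - z)]
  have h3 : C^2 ≥ c^2 + a^2 := by
    rw [hC, ← hyz, ← hzx]; nlinarith [sq_nonneg (z - x - y)]
  have hCpos : 0 < C := by rw [hC]; positivity
  have hca : C > a := by nlinarith [hb.le, sq_nonneg b]
  have hcb : C > b := by nlinarith [ha.le, sq_nonneg a]
  have hcc : C > c := by nlinarith [hb.le, sq_nonneg b]
  exact ⟨h1, h2, h3, hca, hcb, hcc⟩
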